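/- Let X, Y, W be independent exponentials with means γ_AB, γ_AR, γ_RB > 0, let ρ > 0, R ≥ 0, and set V = W/(W + γ_AR + 1/ρ). Then P((1 + ρX + ρYV)/(1 + ρY) < 2^{2R}) = 1 − (γ_AB/((2^{2R} − 1)γ_AR + γ_AB)) e^{−(2^{2R}−1)/(ρ γ_AB)} [μ₁(β₂ − 1) e^{μ₁ β₂} Ei(−μ₁ β₂) + 1], where μ₁ = (γ_AR + 1/ρ)/γ_RB and β₂ = (2^{2R} γ_AR + γ_AB)/((2^{2R} − 1) γ_AR + γ_AB). -/

import Mathlib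

open MeasureTheory ProbabilityTheory Real Set
open scoped ENNReal

noncomputable def Ei (x : ℝ) : ℝ := ∫ t in Set.Iic x, Real.exp t / t


-- integral of exponential density
lemma exp_density_int {l : ℝ} (hl : 0 < l) : ∫ w in Ioi (0:ℝ), l * exp (-(l*w)) = 1 := by
  rw [MeasureTheory.integral_const_mul]
  have h := integral_comp_mul_left_Ioi (fun x => exp (-x)) 0 hl
  simp only [mul_zero, integral_exp_neg_Ioi_zero, smul_eq_mul, mul_one] at h
  rw [h, mul_inv_cancel₀ hl.ne']

-- shift lemma
lemma shift_Ioi (f : ℝ → ℝ) (a d : ℝ) : ∫ x in Ioi a, f (x + d) = ∫ x in Ioi (a + d), f x := by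
  have h1 : ∀ x : ℝ, (Ioi a).indicator (fun x => f (x + d)) x
      = (Ioi (a + d)).indicator f (x + d) := by
    intro x
    by_cases hx : x ∈ Ioi a
    · rw [indicator_of_mem hx, indicator_of_mem (by simpa using add_lt_add_right hx d)]
    · rw [indicator_of_notMem hx, indicator_of_notMem (by simp at hx ⊢; linarith)]
  rw [← integral_indicator measurableSet_Ioi, ← integral_indicator measurableSet_Ioi]
  calc ∫ x, (Ioi a).indicator (fun x => f (x + d)) x
      = ∫ x, (Ioi (a + d)).indicator f (x + d) := by simp_rw [h1]
    _ = ∫ x, (Ioi (a + d)).indicator f x := by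
        exact integral_add_right_eq_self _ d

-- the key exponential-integral identity
lemma exp_over_linear_int {l d : ℝ} (hl : 0 < l) (hd : 0 < d) :
    ∫ w in Ioi (0:ℝ), exp (-(l*w)) / (w + d) = -(exp (l*d)) * Ei (-(l*d)) := by
  have step1 : ∫ w in Ioi (0:ℝ), exp (-(l*w)) / (w + d)
      = exp (l*d) * ∫ u in Ioi d, exp (-(l*u)) / u := by
    rw [← MeasureTheory.integral_const_mul]
    have := shift_Ioi (fun u => exp (l*d) * (exp (-(l*u)) / u)) 0 d
    rw [zero_add] at this
    rw [← this]
    refine setIntegral_congr_fun measurableSet_Ioi (fun w hw => ?_)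
    rw [mul_div_assoc', ← exp_add]
    ring_nf
  have step2 : ∫ u in Ioi d, exp (-(l*u)) / u = - Ei (-(l*d)) := by
    have hneg := integral_comp_neg_Ioi (l*d) (fun t => exp t / t)
    -- ∫ x in Ioi (l*d), exp (-x) / (-x) = Ei (-(l*d))
    have hmul := integral_comp_mul_left_Ioi (fun x => exp (-x) / x) d hl
    -- ∫ u in Ioi d, exp (-(l*u)) / (l*u) = l⁻¹ • ∫ x in Ioi (l*d), exp (-x) / x
    have h3 : ∫ u in Ioi d, exp (-(l*u)) / (l*u) = l⁻¹ * ∫ u in Ioi d, exp (-(l*u)) / u := by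
      rw [← MeasureTheory.integral_const_mul]
      refine setIntegral_congr_fun measurableSet_Ioi (fun u hu => ?_)
      field_simp
    have h4 : ∫ x in Ioi (l*d), exp (-x) / x = - Ei (-(l*d)) := by
      have : ∫ x in Ioi (l*d), exp (-x) / (-x) = Ei (-(l*d)) := hneg
      have h5 : ∫ x in Ioi (l*d), exp (-x) / (-x) = - ∫ x in Ioi (l*d), exp (-x) / x := by
        rw [← MeasureTheory.integral_neg]
        refine setIntegral_congr_fun measurableSet_Ioi (fun x hx => ?_)
        rw [div_neg]
      rw [h5] at this
      linarith
    rw [h3, h4, smul_eq_mul] at hmul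
    have : l * (l⁻¹ * ∫ u in Ioi d, exp (-(l*u)) / u) = l * (l⁻¹ * (- Ei (-(l*d)))) := by
      rw [hmul]
    rwa [← mul_assoc, ← mul_assoc, mul_inv_cancel₀ hl.ne', one_mul, one_mul] at this
  rw [step1, step2]; ring

lemma intOn_exp {l : ℝ} (hl : 0 < l) :
    IntegrableOn (fun w : ℝ => l * exp (-(l*w))) (Ioi 0) := by
  simp_rw [neg_mul_eq_neg_mul]
  exact (exp_neg_integrableOn_Ioi 0 hl).const_mul l

lemma intOn_exp_div {l d : ℝ} (hl : 0 < l) (hd : 0 < d) :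
    IntegrableOn (fun w : ℝ => exp (-(l*w)) / (w + d)) (Ioi 0) := by
  refine Integrable.mono ((exp_neg_integrableOn_Ioi 0 hl).const_mul d⁻¹) ?_ ?_
  · exact ((measurable_exp.comp (measurable_id.const_mul l).neg).div
      ((measurable_id.add_const d))).aestronglyMeasurable
  · rw [ae_restrict_iff' measurableSet_Ioi]
    refine ae_of_all _ fun w hw => ?_
    simp only [mem_Ioi] at hw
    have hwd : 0 < w + d := by linarith
    rw [norm_eq_abs, norm_eq_abs, abs_of_nonneg (by positivity), abs_of_nonneg (by positivity),
      ← neg_mul]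
    rw [div_le_iff₀ hwd]
    calc exp (-l*w) = d⁻¹ * exp (-l*w) * d := by field_simp
      _ ≤ d⁻¹ * exp (-l*w) * (w + d) := by
          refine mul_le_mul_of_nonneg_left (by linarith) (by positivity)

lemma expPDF_lap {r s : ℝ} (hr : 0 < r) (hs : 0 < s) :
    ∫⁻ y, exponentialPDF r y * ENNReal.ofReal (exp (-(s*y))) = ENNReal.ofReal (r/(r+s)) := by
  have key : ∀ y : ℝ, exponentialPDF r y * ENNReal.ofReal (exp (-(s*y)))
      = ENNReal.ofReal (r/(r+s)) * exponentialPDF (r+s) y := by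
    intro y
    rcases le_or_gt 0 y with hy | hy
    · rw [exponentialPDF_of_nonneg hy, exponentialPDF_of_nonneg hy,
        ← ENNReal.ofReal_mul (by positivity), ← ENNReal.ofReal_mul (by positivity)]
      have hE : exp (-(r*y)) * exp (-(s*y)) = exp (-((r+s)*y)) := by
        rw [← exp_add]; congr 1; ring
      rw [← hE]; field_simp
    · rw [exponentialPDF_of_neg hy, exponentialPDF_of_neg hy, zero_mul, mul_zero]
  simp_rw [key]
  rw [lintegral_const_mul _ (show Measurable (exponentialPDF (r+s)) from
      (measurable_exponentialPDFReal _).ennreal_ofReal),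
    lintegral_exponentialPDF_eq_one (by positivity), mul_one]

lemma expMeasure_Iio_zero {r : ℝ} : expMeasure r (Iio 0) = 0 := by
  rw [expMeasure, gammaMeasure, withDensity_apply _ measurableSet_Iio]
  exact lintegral_gammaPDF_of_nonpos le_rfl

lemma expMeasure_Ico {r t : ℝ} (hr : 0 < r) (ht : 0 ≤ t) :
    expMeasure r {x : ℝ | 0 ≤ x ∧ x < t} = ENNReal.ofReal (1 - exp (-(r*t))) := by
  have hset : {x : ℝ | 0 ≤ x ∧ x < t} = Ico 0 t := rfl
  have hIic := lintegral_exponentialPDF_eq_antiDeriv hr t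
  rw [if_pos ht] at hIic
  have hpdf : gammaPDF 1 r = exponentialPDF r := rfl
  rw [hset, expMeasure, gammaMeasure, withDensity_apply _ measurableSet_Ico, hpdf]
  rw [lintegral_Iic_eq_lintegral_Iio_add_Icc _ ht, lintegral_exponentialPDF_of_nonpos le_rfl,
    zero_add] at hIic
  rw [← hIic]
  exact setLIntegral_congr Ico_ae_eq_Icc

lemma lintegral_expMeasure {r : ℝ} {f : ℝ → ℝ≥0∞} (hf : Measurable f) :
    ∫⁻ y, f y ∂(expMeasure r) = ∫⁻ y, exponentialPDF r y * f y := by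
  rw [expMeasure, gammaMeasure,
    lintegral_withDensity_eq_lintegral_mul _ (show Measurable (gammaPDF 1 r) from
      (measurable_gammaPDFReal 1 r).ennreal_ofReal) hf]
  rfl

set_option maxHeartbeats 2000000 in
/-- Proposition 1: the exact secrecy outage probability of AF relaying with a
single-antenna relay. With `V = W/(W + γAR + 1/ρ)`,
`P((1 + ρX + ρYV)/(1 + ρY) < 2^{2R})
  = 1 - γAB/((2^{2R}-1)γAR + γAB) e^{-(2^{2R}-1)/(ργAB)} [μ₁(β₂-1)e^{μ₁β₂}Ei(-μ₁β₂)+1]`. -/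
theorem sop_AF_single_antenna {Ω : Type*} [MeasurableSpace Ω] (μ : Measure Ω)
    [IsProbabilityMeasure μ] (γAB γAR γRB ρ R : ℝ)
    (hAB : 0 < γAB) (hAR : 0 < γAR) (hRB : 0 < γRB) (hρ : 0 < ρ) (hR : 0 ≤ R)
    (X Y W : Ω → ℝ) (hXm : Measurable X) (hYm : Measurable Y) (hWm : Measurable W)
    (hX : Measure.map X μ = expMeasure (1 / γAB))
    (hY : Measure.map Y μ = expMeasure (1 / γAR))
    (hW : Measure.map W μ = expMeasure (1 / γRB))
    (hindep : iIndepFun ![X, Y, W] μ) :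
    μ {ω | (1 + ρ * X ω + ρ * Y ω * (W ω / (W ω + γAR + 1 / ρ))) / (1 + ρ * Y ω)
            < (2 : ℝ) ^ (2 * R)}
      = ENNReal.ofReal
          (1 - γAB / (((2 : ℝ) ^ (2 * R) - 1) * γAR + γAB)
              * Real.exp (-((2 : ℝ) ^ (2 * R) - 1) / (ρ * γAB))
              * ((γAR + 1 / ρ) / γRB
                    * (((2 : ℝ) ^ (2 * R) * γAR + γAB)
                        / (((2 : ℝ) ^ (2 * R) - 1) * γAR + γAB) - 1)
                    * Real.exp ((γAR + 1 / ρ) / γRB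
                        * (((2 : ℝ) ^ (2 * R) * γAR + γAB)
                            / (((2 : ℝ) ^ (2 * R) - 1) * γAR + γAB)))
                    * Ei (-((γAR + 1 / ρ) / γRB
                        * (((2 : ℝ) ^ (2 * R) * γAR + γAB)
                            / (((2 : ℝ) ^ (2 * R) - 1) * γAR + γAB)))) + 1)) := by
  haveI hPX : IsProbabilityMeasure (expMeasure (1/γAB)) :=
    isProbabilityMeasure_expMeasure (by positivity)
  haveI hPY : IsProbabilityMeasure (expMeasure (1/γAR)) :=
    isProbabilityMeasure_expMeasure (by positivity)
  haveI hPW : IsProbabilityMeasure (expMeasure (1/γRB)) :=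
    isProbabilityMeasure_expMeasure (by positivity)
  set T : ℝ := (2:ℝ) ^ (2*R) with hTdef
  have hT1 : 1 ≤ T := by
    rw [hTdef, show (1:ℝ) = (2:ℝ) ^ (0:ℝ) by simp]
    exact Real.rpow_le_rpow_of_exponent_le one_le_two (by positivity)
  set c : ℝ := γAR + 1/ρ with hcdef
  set b : ℝ := (T-1)*γAR + γAB with hbdef
  set a : ℝ := T*γAR + γAB with hadef
  have hc : 0 < c := by positivity
  have hb : 0 < b := by nlinarith
  have ha : 0 < a := by nlinarith
  set d : ℝ := a*c/b with hddef
  have hd : 0 < d := by positivity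
  set kk : ℝ := (T-1)/(ρ*γAB) with hkkdef
  have hkk : 0 ≤ kk := by
    exact div_nonneg (by linarith) (by positivity)
  set K : ℝ := exp (-kk) with hKdef
  have hK0 : 0 < K := exp_pos _
  have hK1 : K ≤ 1 := exp_le_one_iff.mpr (by linarith)
  have hγABb : γAB ≤ b := by nlinarith
  -- a.e. nonnegativity of the random variables
  have haeX : ∀ᵐ ω ∂μ, 0 ≤ X ω := by
    rw [ae_iff]
    have h1 : {ω | ¬ 0 ≤ X ω} = X ⁻¹' (Iio 0) := by ext ω; simp [not_le]
    rw [h1, ← Measure.map_apply hXm measurableSet_Iio, hX, expMeasure, gammaMeasure,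
      withDensity_apply _ measurableSet_Iio]
    exact lintegral_gammaPDF_of_nonpos le_rfl
  have haeY : ∀ᵐ ω ∂μ, 0 ≤ Y ω := by
    rw [ae_iff]
    have h1 : {ω | ¬ 0 ≤ Y ω} = Y ⁻¹' (Iio 0) := by ext ω; simp [not_le]
    rw [h1, ← Measure.map_apply hYm measurableSet_Iio, hY, expMeasure, gammaMeasure,
      withDensity_apply _ measurableSet_Iio]
    exact lintegral_gammaPDF_of_nonpos le_rfl
  have haeW : ∀ᵐ ω ∂μ, 0 ≤ W ω := by
    rw [ae_iff]
    have h1 : {ω | ¬ 0 ≤ W ω} = W ⁻¹' (Iio 0) := by ext ω; simp [not_le]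
    rw [h1, ← Measure.map_apply hWm measurableSet_Iio, hW, expMeasure, gammaMeasure,
      withDensity_apply _ measurableSet_Iio]
    exact lintegral_gammaPDF_of_nonpos le_rfl
  -- rewrite the event
  have hsets : μ {ω | (1 + ρ * X ω + ρ * Y ω * (W ω / (W ω + γAR + 1 / ρ))) / (1 + ρ * Y ω) < T}
      = μ {ω | 0 ≤ X ω ∧ 0 ≤ Y ω ∧ 0 ≤ W ω ∧
          X ω < (T-1)/ρ + Y ω * (T - W ω / (W ω + c))} := by
    refine measure_congr ?_
    rw [Filter.eventuallyEq_set]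
    filter_upwards [haeX, haeY, haeW] with ω hx hy hw
    show (1 + ρ * X ω + ρ * Y ω * (W ω / (W ω + γAR + 1 / ρ))) / (1 + ρ * Y ω) < T ↔ _
    have hWc : W ω + γAR + 1/ρ = W ω + c := by rw [hcdef]; ring
    rw [hWc]
    have hWcpos : 0 < W ω + c := by linarith
    have hv0 : 0 ≤ W ω / (W ω + c) := by positivity
    have hv1 : W ω / (W ω + c) < 1 := by rw [div_lt_one hWcpos]; linarith
    have h1Y : 0 < 1 + ρ * Y ω := by nlinarith
    rw [div_lt_iff₀ h1Y]
    have hrw : (T-1)/ρ + Y ω * (T - W ω/(W ω + c))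
        = ((T-1) + ρ*(Y ω*(T - W ω/(W ω + c))))/ρ := by field_simp
    constructor
    · intro h
      refine ⟨hx, hy, hw, ?_⟩
      rw [hrw, lt_div_iff₀ hρ]
      nlinarith
    · rintro ⟨-, -, -, h⟩
      rw [hrw, lt_div_iff₀ hρ] at h
      nlinarith
  rw [hsets]
  -- the target set as a preimage
  set S : Set ((ℝ×ℝ)×ℝ) := {p | 0 ≤ p.2 ∧ 0 ≤ p.1.2 ∧ 0 ≤ p.1.1 ∧
      p.2 < (T-1)/ρ + p.1.2*(T - p.1.1/(p.1.1+c))} with hSdef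
  have hgm : Measurable (fun p : ℝ×ℝ => (T-1)/ρ + p.2*(T - p.1/(p.1+c))) := by
    refine Measurable.add measurable_const ?_
    exact measurable_snd.mul (Measurable.sub measurable_const
      ((measurable_fst).div ((measurable_fst).add_const c)))
  have hS : MeasurableSet S := by
    rw [hSdef]
    have e1 : {p : (ℝ×ℝ)×ℝ | 0 ≤ p.2 ∧ 0 ≤ p.1.2 ∧ 0 ≤ p.1.1 ∧
        p.2 < (T-1)/ρ + p.1.2*(T - p.1.1/(p.1.1+c))}
        = {p : (ℝ×ℝ)×ℝ | 0 ≤ p.2} ∩ ({p | 0 ≤ p.1.2} ∩ ({p | 0 ≤ p.1.1} ∩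
          {p | p.2 < (T-1)/ρ + p.1.2*(T - p.1.1/(p.1.1+c))})) := rfl
    rw [e1]
    refine (measurableSet_le measurable_const measurable_snd).inter
      ((measurableSet_le measurable_const measurable_fst.snd).inter
        ((measurableSet_le measurable_const measurable_fst.fst).inter ?_))
    exact measurableSet_lt measurable_snd (hgm.comp measurable_fst)
  -- joint law
  have hmeasv : ∀ i, Measurable (![X, Y, W] i) := by
    intro i; fin_cases i <;> assumption
  have h1 : IndepFun W Y μ := by
    have := hindep.indepFun (show (2 : Fin 3) ≠ 1 by decide)
    simpa using this
  have hWY : μ.map (fun ω => (W ω, Y ω)) = (expMeasure (1/γRB)).prod (expMeasure (1/γAR)) := by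
    rw [← hW, ← hY]
    exact (indepFun_iff_map_prod_eq_prod_map_map hWm.aemeasurable hYm.aemeasurable).mp h1
  have h2 : IndepFun (fun ω => (W ω, Y ω)) X μ := by
    have := hindep.indepFun_prodMk hmeasv 2 1 0 (by decide) (by decide)
    simpa using this
  have hmap : μ.map (fun ω => ((W ω, Y ω), X ω))
      = ((expMeasure (1/γRB)).prod (expMeasure (1/γAR))).prod (expMeasure (1/γAB)) := by
    rw [← hWY, ← hX]
    exact (indepFun_iff_map_prod_eq_prod_map_map
      (hWm.prodMk hYm).aemeasurable hXm.aemeasurable).mp h2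
  have hpre : {ω | 0 ≤ X ω ∧ 0 ≤ Y ω ∧ 0 ≤ W ω ∧
      X ω < (T-1)/ρ + Y ω * (T - W ω / (W ω + c))}
      = (fun ω => ((W ω, Y ω), X ω)) ⁻¹' S := rfl
  rw [hpre, ← Measure.map_apply ((hWm.prodMk hYm).prodMk hXm) hS, hmap,
    Measure.prod_apply hS]
  -- evaluate the inner (X) measure
  set F : ℝ×ℝ → ℝ≥0∞ := fun p => (Ici 0 ×ˢ Ici 0).indicator
      (fun q : ℝ×ℝ => ENNReal.ofReal
        (1 - exp (-((1/γAB) * ((T-1)/ρ + q.2*(T - q.1/(q.1+c))))))) p with hFdef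
  have hFm : Measurable F := by
    rw [hFdef]
    refine Measurable.indicator ?_ (measurableSet_Ici.prod measurableSet_Ici)
    exact (measurable_const.sub ((hgm.const_mul (1/γAB)).neg.exp)).ennreal_ofReal
  have hEval : ∀ p : ℝ×ℝ, expMeasure (1/γAB) (Prod.mk p ⁻¹' S) = F p := by
    intro p
    by_cases hp : p ∈ Ici (0:ℝ) ×ˢ Ici (0:ℝ)
    · obtain ⟨hw, hy⟩ := hp
      simp only [mem_Ici] at hw hy
      have hwc : 0 < p.1 + c := by linarith
      have hv1 : p.1/(p.1+c) ≤ 1 := by rw [div_le_one hwc]; linarith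
      have hg0 : 0 ≤ (T-1)/ρ + p.2*(T - p.1/(p.1+c)) :=
        add_nonneg (div_nonneg (by linarith) hρ.le) (mul_nonneg hy (by linarith))
      have hsetp : Prod.mk p ⁻¹' S = {x : ℝ | 0 ≤ x ∧ x < (T-1)/ρ + p.2*(T - p.1/(p.1+c))} := by
        ext x
        constructor
        · rintro ⟨h1, -, -, h4⟩; exact ⟨h1, h4⟩
        · rintro ⟨h1, h4⟩; exact ⟨h1, hy, hw, h4⟩
      rw [hsetp]
      simp only [hFdef]
      rw [indicator_of_mem (show p ∈ Ici (0:ℝ) ×ˢ Ici (0:ℝ) from ⟨hw, hy⟩)]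
      rw [expMeasure_Ico (by positivity) hg0]
    · have hsetp : Prod.mk p ⁻¹' S = (∅ : Set ℝ) := by
        ext x
        simp only [mem_empty_iff_false, iff_false]
        rintro ⟨-, h2, h3, -⟩
        exact hp ⟨h3, h2⟩
      rw [hsetp]
      simp only [hFdef]
      rw [indicator_of_notMem hp]
      simp
  rw [lintegral_congr hEval, lintegral_prod _ hFm.aemeasurable]
  -- the inner integral over Y
  have hpdfYm : Measurable (exponentialPDF (1/γAR)) :=
    (measurable_exponentialPDFReal _).ennreal_ofReal
  have hpdfWm : Measurable (exponentialPDF (1/γRB)) :=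
    (measurable_exponentialPDFReal _).ennreal_ofReal
  have hpdf_ne_top : ∀ (r : ℝ) (y : ℝ), exponentialPDF r y ≠ ⊤ := by
    intro r y; simp [exponentialPDF]
  have hInner : ∀ w : ℝ, 0 ≤ w → (∫⁻ y, exponentialPDF (1/γAR) y * F (w, y))
      = 1 - ENNReal.ofReal (K * (γAB*(w+c)/(b*w+a*c))) := by
    intro w hw
    have hwc : 0 < w + c := by linarith
    have hv0 : 0 ≤ w/(w+c) := by positivity
    have hv1 : w/(w+c) < 1 := by rw [div_lt_one hwc]; linarith
    set s : ℝ := (T - w/(w+c))/γAB with hsdef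
    have hs : 0 < s := div_pos (by linarith) hAB
    have hEm : Measurable (fun y : ℝ => ENNReal.ofReal (exp (-(s*y)))) :=
      ((measurable_id.const_mul s).neg.exp).ennreal_ofReal
    have hptw : ∀ y : ℝ, exponentialPDF (1/γAR) y * F (w, y)
        = exponentialPDF (1/γAR) y - exponentialPDF (1/γAR) y *
            (ENNReal.ofReal K * ENNReal.ofReal (exp (-(s*y)))) := by
      intro y
      rcases le_or_gt 0 y with hy | hy
      · have hmem : ((w, y) : ℝ×ℝ) ∈ Ici (0:ℝ) ×ˢ Ici (0:ℝ) := ⟨hw, hy⟩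
        simp only [hFdef]
        rw [indicator_of_mem hmem]
        have harg : (1/γAB) * ((T-1)/ρ + y*(T - w/(w+c))) = kk + s*y := by
          rw [hkkdef, hsdef]; field_simp
        rw [show ((w,y) : ℝ×ℝ).2 = y from rfl, show ((w,y) : ℝ×ℝ).1 = w from rfl, harg]
        have hexp : exp (-(kk + s*y)) = K * exp (-(s*y)) := by
          rw [hKdef, ← exp_add]; congr 1; ring
        rw [hexp, ← ENNReal.ofReal_mul hK0.le,
          show ENNReal.ofReal (1 - K*exp (-(s*y)))
            = 1 - ENNReal.ofReal (K*exp (-(s*y))) from by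
              rw [← ENNReal.ofReal_one, ← ENNReal.ofReal_sub _ (by positivity)],
          ENNReal.mul_sub (fun _ _ => hpdf_ne_top _ y), mul_one]
      · rw [exponentialPDF_of_neg hy, zero_mul, zero_mul]
        simp
    rw [lintegral_congr hptw]
    have hval : ∫⁻ y, exponentialPDF (1/γAR) y *
        (ENNReal.ofReal K * ENNReal.ofReal (exp (-(s*y))))
        = ENNReal.ofReal K * ENNReal.ofReal ((1/γAR)/((1/γAR)+s)) := by
      have hcomm : ∀ y : ℝ, exponentialPDF (1/γAR) y *
          (ENNReal.ofReal K * ENNReal.ofReal (exp (-(s*y))))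
          = ENNReal.ofReal K * (exponentialPDF (1/γAR) y * ENNReal.ofReal (exp (-(s*y)))) := by
        intro y; ring
      simp_rw [hcomm]
      rw [lintegral_const_mul _ (show Measurable (fun y => exponentialPDF (1/γAR) y * ENNReal.ofReal (exp (-(s*y)))) from hpdfYm.mul hEm), expPDF_lap (by positivity) hs]
    rw [lintegral_sub (show Measurable (fun y => exponentialPDF (1/γAR) y * (ENNReal.ofReal K * ENNReal.ofReal (exp (-(s*y))))) from hpdfYm.mul (measurable_const.mul hEm))
      (by rw [hval]; exact ENNReal.mul_ne_top ENNReal.ofReal_ne_top ENNReal.ofReal_ne_top)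
      (ae_of_all _ (fun y => ?_)), hval, lintegral_exponentialPDF_eq_one (by positivity)]
    · congr 1
      rw [← ENNReal.ofReal_mul hK0.le]
      congr 1
      congr 1
      have hba : 0 < b*w + a*c := by nlinarith
      have h1s : 0 < 1/γAR + s := by positivity
      rw [div_eq_div_iff h1s.ne' hba.ne', hsdef, hbdef, hadef]
      field_simp
      ring
    · rcases le_or_gt 0 y with hy | hy
      · calc exponentialPDF (1/γAR) y * (ENNReal.ofReal K * ENNReal.ofReal (exp (-(s*y))))
            ≤ exponentialPDF (1/γAR) y * 1 := by
              refine mul_le_mul_right (mul_le_one' ?_ ?_) _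
              · exact ENNReal.ofReal_le_one.mpr hK1
              · exact ENNReal.ofReal_le_one.mpr (exp_le_one_iff.mpr (by nlinarith))
          _ = exponentialPDF (1/γAR) y := mul_one _
      · simp [exponentialPDF_of_neg hy]
  -- the outer integral over W
  have hlW : (0:ℝ) < 1/γRB := by positivity
  have hIm : Measurable (fun w : ℝ => ∫⁻ y, F (w, y) ∂expMeasure (1/γAR)) :=
    hFm.lintegral_prod_right'
  rw [lintegral_expMeasure hIm]
  have hout : ∀ w : ℝ, exponentialPDF (1/γRB) w * (∫⁻ y, F (w, y) ∂expMeasure (1/γAR))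
      = exponentialPDF (1/γRB) w - exponentialPDF (1/γRB) w *
          ENNReal.ofReal (K*(γAB*(w+c)/(b*w+a*c))) := by
    intro w
    rcases le_or_gt 0 w with hw | hw
    · rw [lintegral_expMeasure (show Measurable (fun y => F (w, y)) from hFm.comp measurable_prodMk_left), hInner w hw,
        ENNReal.mul_sub (fun _ _ => hpdf_ne_top _ w), mul_one]
    · rw [exponentialPDF_of_neg hw]
      simp
  rw [lintegral_congr hout]
  have hφm : Measurable (fun w : ℝ => ENNReal.ofReal (K*(γAB*(w+c)/(b*w+a*c)))) := by
    refine Measurable.ennreal_ofReal ?_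
    exact (((measurable_id.add_const c).const_mul γAB).div
      ((measurable_id.const_mul b).add_const (a*c))).const_mul K
  have hφ1 : ∀ w : ℝ, 0 ≤ w → K*(γAB*(w+c)/(b*w+a*c)) ≤ 1 := by
    intro w hw
    have hba : 0 < b*w + a*c := by nlinarith
    have hratio : γAB*(w+c)/(b*w+a*c) ≤ 1 := by
      rw [div_le_one hba]
      nlinarith
    have hratio0 : 0 ≤ γAB*(w+c)/(b*w+a*c) := by
      apply div_nonneg ?_ hba.le
      nlinarith
    nlinarith
  have hφ0 : ∀ w : ℝ, 0 ≤ w → 0 ≤ K*(γAB*(w+c)/(b*w+a*c)) := by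
    intro w hw
    have hba : 0 < b*w + a*c := by nlinarith
    have : 0 ≤ γAB*(w+c)/(b*w+a*c) := by
      apply div_nonneg ?_ hba.le
      nlinarith
    nlinarith
  have hφle : ∀ w : ℝ, exponentialPDF (1/γRB) w * ENNReal.ofReal (K*(γAB*(w+c)/(b*w+a*c)))
      ≤ exponentialPDF (1/γRB) w := by
    intro w
    rcases le_or_gt 0 w with hw | hw
    · calc exponentialPDF (1/γRB) w * ENNReal.ofReal (K*(γAB*(w+c)/(b*w+a*c)))
          ≤ exponentialPDF (1/γRB) w * 1 :=
            mul_le_mul_right (ENNReal.ofReal_le_one.mpr (hφ1 w hw)) _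
        _ = exponentialPDF (1/γRB) w := mul_one _
    · simp [exponentialPDF_of_neg hw]
  rw [lintegral_sub (show Measurable (fun w => exponentialPDF (1/γRB) w * ENNReal.ofReal (K*(γAB*(w+c)/(b*w+a*c)))) from hpdfWm.mul hφm)
    (by
      refine ne_top_of_le_ne_top ENNReal.one_ne_top ?_
      rw [← lintegral_exponentialPDF_eq_one hlW]
      exact lintegral_mono hφle)
    (ae_of_all _ hφle), lintegral_exponentialPDF_eq_one hlW]
  -- convert the remaining lintegral to a real integral
  have hψm : Measurable (fun w : ℝ => (1/γRB * exp (-(1/γRB*w))) * (K*(γAB*(w+c)/(b*w+a*c)))) := by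
    refine Measurable.mul ?_ ?_
    · exact ((measurable_id.const_mul (1/γRB)).neg.exp).const_mul (1/γRB)
    · exact (((measurable_id.add_const c).const_mul γAB).div
        ((measurable_id.const_mul b).add_const (a*c))).const_mul K
  have hint : IntegrableOn
      (fun w : ℝ => (1/γRB * exp (-(1/γRB*w))) * (K*(γAB*(w+c)/(b*w+a*c)))) (Ioi 0) := by
    refine Integrable.mono (intOn_exp hlW) hψm.aestronglyMeasurable ?_
    rw [ae_restrict_iff' measurableSet_Ioi]
    refine ae_of_all _ fun w hw => ?_
    simp only [mem_Ioi] at hw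
    have hbase : 0 ≤ 1/γRB * exp (-(1/γRB*w)) := by positivity
    rw [norm_eq_abs, norm_eq_abs, abs_of_nonneg (mul_nonneg hbase (hφ0 w hw.le)),
      abs_of_nonneg hbase]
    calc (1/γRB * exp (-(1/γRB*w))) * (K*(γAB*(w+c)/(b*w+a*c)))
        ≤ (1/γRB * exp (-(1/γRB*w))) * 1 :=
          mul_le_mul_of_nonneg_left (hφ1 w hw.le) hbase
      _ = 1/γRB * exp (-(1/γRB*w)) := mul_one _
  have hlr : ∫⁻ w, exponentialPDF (1/γRB) w * ENNReal.ofReal (K*(γAB*(w+c)/(b*w+a*c)))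
      = ENNReal.ofReal (∫ w in Ioi 0,
          (1/γRB * exp (-(1/γRB*w))) * (K*(γAB*(w+c)/(b*w+a*c)))) := by
    have hp : ∀ w : ℝ, exponentialPDF (1/γRB) w * ENNReal.ofReal (K*(γAB*(w+c)/(b*w+a*c)))
        = (Ici (0:ℝ)).indicator (fun w => ENNReal.ofReal
            ((1/γRB * exp (-(1/γRB*w))) * (K*(γAB*(w+c)/(b*w+a*c))))) w := by
      intro w
      rcases le_or_gt 0 w with hw | hw
      · rw [exponentialPDF_of_nonneg hw, indicator_of_mem (mem_Ici.mpr hw),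
          ← ENNReal.ofReal_mul (by positivity)]
      · rw [exponentialPDF_of_neg hw, zero_mul,
          indicator_of_notMem (by simpa using not_le.mpr hw)]
    rw [lintegral_congr hp, lintegral_indicator measurableSet_Ici _,
      ← setLIntegral_congr Ioi_ae_eq_Ici]
    refine (ofReal_integral_eq_lintegral_ofReal hint ?_).symm
    exact (ae_restrict_iff' measurableSet_Ioi).mpr (ae_of_all _ fun w hw =>
      mul_nonneg (by positivity) (hφ0 w (le_of_lt hw)))
  rw [hlr]
  have hJ0 : 0 ≤ ∫ w in Ioi 0, (1/γRB * exp (-(1/γRB*w))) * (K*(γAB*(w+c)/(b*w+a*c))) :=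
    setIntegral_nonneg measurableSet_Ioi fun w hw =>
      mul_nonneg (by positivity) (hφ0 w (le_of_lt hw))
  rw [show (1:ℝ≥0∞) - ENNReal.ofReal (∫ w in Ioi 0,
        (1/γRB * exp (-(1/γRB*w))) * (K*(γAB*(w+c)/(b*w+a*c))))
      = ENNReal.ofReal (1 - ∫ w in Ioi 0,
        (1/γRB * exp (-(1/γRB*w))) * (K*(γAB*(w+c)/(b*w+a*c)))) from by
    rw [ENNReal.ofReal_sub _ hJ0, ENNReal.ofReal_one]]
  have hJ : ∫ w in Ioi 0, (1/γRB * exp (-(1/γRB*w))) * (K*(γAB*(w+c)/(b*w+a*c)))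
      = K * (γAB/b) * (1 + (d - c)*(1/γRB) * (exp (1/γRB*d) * Ei (-(1/γRB*d)))) := by
    have hdecomp : ∀ w ∈ Ioi (0:ℝ),
        (1/γRB * exp (-(1/γRB*w))) * (K*(γAB*(w+c)/(b*w+a*c)))
        = (K*(γAB/b)) * (1/γRB * exp (-(1/γRB*w)))
          + (K*(γAB/b)*(c-d)*(1/γRB)) * (exp (-(1/γRB*w))/(w+d)) := by
      intro w hw
      simp only [mem_Ioi] at hw
      have hwd : 0 < w + d := by linarith
      have hbw : b*w + a*c = b*(w+d) := by rw [hddef]; field_simp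
      rw [hbw, hddef]
      field_simp
      ring
    have hI1 : ∫ w in Ioi 0, (K*(γAB/b)) * (1/γRB * exp (-(1/γRB*w)))
        = K*(γAB/b) := by
      rw [MeasureTheory.integral_const_mul, exp_density_int hlW, mul_one]
    have hI2 : ∫ w in Ioi 0, (K*(γAB/b)*(c-d)*(1/γRB)) * (exp (-(1/γRB*w))/(w+d))
        = (K*(γAB/b)*(c-d)*(1/γRB)) * (-(exp (1/γRB*d)) * Ei (-(1/γRB*d))) := by
      rw [MeasureTheory.integral_const_mul, exp_over_linear_int hlW hd]
    rw [setIntegral_congr_fun measurableSet_Ioi hdecomp,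
      integral_add ((intOn_exp hlW).const_mul _) ((intOn_exp_div hlW hd).const_mul _),
      hI1, hI2]
    ring
  rw [hJ]
  congr 1
  have heK : -(T-1)/(ρ*γAB) = -kk := by rw [hkkdef]; ring
  have heA : c/γRB*(a/b) = 1/γRB*d := by rw [hddef]; ring
  rw [heK, heA, ← hKdef, hddef]
  field_simp
  ring
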